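/- For any w_0 ∈ (0, α), the thresholds defined by α_t = w_0 γ̃_t + (α − w_0) ∑_{j≥1} δ^{t−ρ_j} γ_{t−ρ_j} satisfy, for every T ≥ 1, the oracle bound ∑_{t=1}^T δ^{T−t} α_t ≤ α · max(R_δ(T), 1). -/

import Mathlib

open Finset


/-- The time `ρ_j` of the `j`-th rejection: `min {t ≥ 0 : ∑_{i=1}^t R_i ≥ j}`,
equal to `⊤` (infinity) if no such time exists. -/
noncomputable def rejTime (R : ℕ → ℝ) (j : ℕ) : ℕ∞ :=
  sInf {n : ℕ∞ | ∃ m : ℕ, n = (m : ℕ∞) ∧ (j : ℝ) ≤ ∑ i ∈ Finset.Icc 1 m, R i}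

/-- The term `δ^{t−ρ} γ_{t−ρ}`, interpreted as `0` when `ρ = ∞`. -/
noncomputable def decayTerm (δ : ℝ) (γ : ℤ → ℝ) (t : ℕ) (ρ : ℕ∞) : ℝ :=
  ρ.recTopCoe 0 fun r => δ ^ (t - r) * γ ((t : ℤ) - (r : ℤ))

private lemma sumR_le {R : ℕ → ℝ} (hR : ∀ t, R t = 0 ∨ R t = 1) (m : ℕ) :
    ∑ i ∈ Icc 1 m, R i ≤ (m : ℝ) := by
  calc ∑ i ∈ Icc 1 m, R i ≤ ∑ i ∈ Icc 1 m, (1 : ℝ) := by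
        apply Finset.sum_le_sum; intro i _; rcases hR i with h | h <;> rw [h] <;> norm_num
    _ = (m : ℝ) := by simp [Nat.card_Icc]

private lemma rejTime_le_sum {R : ℕ → ℝ} {j m : ℕ} (h : rejTime R j = (m : ℕ∞)) :
    (j : ℝ) ≤ ∑ i ∈ Icc 1 m, R i := by
  set s : Set ℕ∞ := {n : ℕ∞ | ∃ m : ℕ, n = (m : ℕ∞) ∧ (j : ℝ) ≤ ∑ i ∈ Finset.Icc 1 m, R i}
    with hs
  have hne : s.Nonempty := by
    by_contra hemp
    rw [Set.not_nonempty_iff_eq_empty] at hemp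
    rw [rejTime, ← hs, hemp, sInf_empty] at h
    exact (ENat.coe_ne_top m) h.symm
  have hmem := csInf_mem hne
  rw [show sInf s = rejTime R j from rfl, h] at hmem
  obtain ⟨m', hm', hle⟩ := hmem
  have : m = m' := by exact_mod_cast hm'
  rwa [this]

private lemma rejTime_min {R : ℕ → ℝ} {j m m' : ℕ} (h : rejTime R j = (m : ℕ∞))
    (hm' : m' < m) : ∑ i ∈ Icc 1 m', R i < (j : ℝ) := by
  by_contra hc
  push_neg at hc
  have hmem : ((m' : ℕ∞)) ∈ {n : ℕ∞ | ∃ m : ℕ, n = (m : ℕ∞) ∧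
      (j : ℝ) ≤ ∑ i ∈ Finset.Icc 1 m, R i} := ⟨m', rfl, hc⟩
  have := csInf_le (OrderBot.bddBelow _) hmem
  rw [show sInf _ = rejTime R j from rfl, h] at this
  have : m ≤ m' := by exact_mod_cast this
  omega

private lemma rejTime_ge {R : ℕ → ℝ} (hR : ∀ t, R t = 0 ∨ R t = 1) {j m : ℕ}
    (h : rejTime R j = (m : ℕ∞)) : j ≤ m := by
  have h1 := rejTime_le_sum h
  have h2 := sumR_le hR m
  exact_mod_cast h1.trans h2

private lemma rejTime_R_one {R : ℕ → ℝ} (hR : ∀ t, R t = 0 ∨ R t = 1) {j m : ℕ}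
    (hj : 1 ≤ j) (h : rejTime R j = (m : ℕ∞)) : R m = 1 ∧ 1 ≤ m := by
  have hm : 1 ≤ m := le_trans hj (rejTime_ge hR h)
  obtain ⟨k, rfl⟩ : ∃ k, m = k + 1 := ⟨m - 1, by omega⟩
  have hsplit : ∑ i ∈ Icc 1 (k + 1), R i = (∑ i ∈ Icc 1 k, R i) + R (k + 1) :=
    Finset.sum_Icc_succ_top (by omega) R
  have h1 := rejTime_le_sum h
  have h2 := rejTime_min h (Nat.lt_succ_self k)
  rcases hR (k + 1) with h0 | h0
  · exfalso; rw [hsplit, h0, add_zero] at h1; linarith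
  · exact ⟨h0, hm⟩

private lemma rejTime_inj {R : ℕ → ℝ} (hR : ∀ t, R t = 0 ∨ R t = 1) {j₁ j₂ m : ℕ}
    (hj₁ : 1 ≤ j₁) (hj₂ : 1 ≤ j₂) (h₁ : rejTime R j₁ = (m : ℕ∞))
    (h₂ : rejTime R j₂ = (m : ℕ∞)) : j₁ = j₂ := by
  have key : ∀ a b : ℕ, 1 ≤ a → a < b → rejTime R a = (m : ℕ∞) → rejTime R b = (m : ℕ∞) →
      False := by
    intro a b ha hab hA hB
    have hm : 1 ≤ m := (rejTime_R_one hR ha hA).2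
    obtain ⟨k, rfl⟩ : ∃ k, m = k + 1 := ⟨m - 1, by omega⟩
    have hsplit : ∑ i ∈ Icc 1 (k + 1), R i = (∑ i ∈ Icc 1 k, R i) + R (k + 1) :=
      Finset.sum_Icc_succ_top (by omega) R
    have h1 := rejTime_le_sum hB
    have h2 := rejTime_min hA (Nat.lt_succ_self k)
    have hRle : R (k + 1) ≤ 1 := by rcases hR (k + 1) with h0 | h0 <;> rw [h0] <;> norm_num
    have hcast : (a : ℝ) + 1 ≤ (b : ℝ) := by exact_mod_cast Nat.succ_le_of_lt hab
    rw [hsplit] at h1; linarith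
  rcases lt_trichotomy j₁ j₂ with h | h | h
  · exact absurd (key j₁ j₂ hj₁ h h₁ h₂) not_false
  · exact h
  · exact absurd (key j₂ j₁ hj₂ h h₂ h₁) not_false

/-- For any `w₀ ∈ (0, α)`, the thresholds
`α_t = w₀ γ̃_t + (α − w₀) ∑_{j≥1} δ^{t−ρ_j} γ_{t−ρ_j}` satisfy the oracle bound
`∑_{t=1}^T δ^{T−t} α_t ≤ α · max(R_δ(T), 1)` for every `T ≥ 1`. -/
theorem lord_decay_standard_fdr_oracle_bound (δ α w₀ : ℝ)
    (hδ : δ ∈ Set.Ioc (0 : ℝ) 1) (hα : α ∈ Set.Ioo (0 : ℝ) 1)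
    (hw₀ : w₀ ∈ Set.Ioo (0 : ℝ) α)
    (γ : ℤ → ℝ) (hγ_nonneg : ∀ t, 0 ≤ γ t) (hγ_zero : ∀ t : ℤ, t ≤ 0 → γ t = 0)
    (hγ_anti : ∀ s t : ℤ, 1 ≤ s → s ≤ t → γ t ≤ γ s)
    (hγ_sum : ∀ T : ℕ, ∑ t ∈ Finset.Icc 1 T, γ (t : ℤ) ≤ 1)
    (γ' : ℕ → ℝ) (hγ'_pos : ∀ t, 1 ≤ t → 0 < γ' t)
    (hγ'_anti : ∀ s t : ℕ, 1 ≤ s → s ≤ t → γ' t ≤ γ' s)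
    (hγ'_sum : ∀ T : ℕ, 1 ≤ T → ∑ t ∈ Finset.Icc 1 T, δ ^ (T - t) * γ' t ≤ 1)
    (R : ℕ → ℝ) (hR : ∀ t, R t = 0 ∨ R t = 1)
    (A : ℕ → ℝ)
    (hA : ∀ t : ℕ,
      A t = w₀ * γ' t + (α - w₀) * ∑' j : ℕ, decayTerm δ γ t (rejTime R (j + 1)))
    (T : ℕ) (hT : 1 ≤ T) :
    ∑ t ∈ Finset.Icc 1 T, δ ^ (T - t) * A t
      ≤ α * max (∑ t ∈ Finset.Icc 1 T, δ ^ (T - t) * R t) 1 := by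
  obtain ⟨hδ0, hδ1⟩ := hδ
  obtain ⟨hα0, hα1⟩ := hα
  obtain ⟨hw0, hwα⟩ := hw₀
  set M : ℝ := max (∑ t ∈ Finset.Icc 1 T, δ ^ (T - t) * R t) 1 with hM
  have hR_nonneg : ∀ t, 0 ≤ R t := by
    intro t; rcases hR t with h | h <;> rw [h] <;> norm_num
  -- vanishing of decay terms
  have hd_zero : ∀ t j : ℕ, t ≤ j → decayTerm δ γ t (rejTime R (j + 1)) = 0 := by
    intro t j htj
    cases hrt : rejTime R (j + 1) with
    | top => rfl
    | coe m =>
      have hm : j + 1 ≤ m := rejTime_ge hR hrt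
      show δ ^ (t - m) * γ ((t : ℤ) - m) = 0
      rw [hγ_zero _ (by push_cast; omega), mul_zero]
  -- tsum is a finite sum over range T
  have htsum : ∀ t, t ≤ T →
      ∑' j : ℕ, decayTerm δ γ t (rejTime R (j + 1))
        = ∑ j ∈ range T, decayTerm δ γ t (rejTime R (j + 1)) := by
    intro t ht
    apply tsum_eq_sum
    intro j hj
    rw [Finset.mem_range, not_lt] at hj
    exact hd_zero t j (ht.trans hj)
  -- rewrite the LHS
  have hLHS : ∑ t ∈ Finset.Icc 1 T, δ ^ (T - t) * A t
      = w₀ * (∑ t ∈ Finset.Icc 1 T, δ ^ (T - t) * γ' t)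
        + (α - w₀) * ∑ j ∈ range T, ∑ t ∈ Finset.Icc 1 T,
            δ ^ (T - t) * decayTerm δ γ t (rejTime R (j + 1)) := by
    have e1 : ∀ t ∈ Finset.Icc 1 T, δ ^ (T - t) * A t
        = w₀ * (δ ^ (T - t) * γ' t)
          + (α - w₀) * ∑ j ∈ range T, δ ^ (T - t) * decayTerm δ γ t (rejTime R (j + 1)) := by
      intro t ht
      rw [Finset.mem_Icc] at ht
      rw [hA t, htsum t ht.2, ← Finset.mul_sum]
      ring
    rw [Finset.sum_congr rfl e1, Finset.sum_add_distrib, ← Finset.mul_sum, ← Finset.mul_sum]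
    congr 1
    rw [Finset.sum_comm]
  rw [hLHS]
  -- first sum bound
  have hS1 : ∑ t ∈ Finset.Icc 1 T, δ ^ (T - t) * γ' t ≤ M :=
    le_trans (hγ'_sum T hT) (le_max_right _ 1)
  -- second sum bound
  set d : ℕ → ℕ → ℝ := fun t j => decayTerm δ γ t (rejTime R (j + 1)) with hd
  set G : ℕ → ℝ := fun j => ∑ t ∈ Finset.Icc 1 T, δ ^ (T - t) * d t j with hG
  set φ : ℕ → ℕ := fun j => (rejTime R (j + 1)).toNat with hφ
  set s : Finset ℕ := (range T).filter
    (fun j => rejTime R (j + 1) ≠ ⊤ ∧ (rejTime R (j + 1)).toNat ≤ T) with hs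
  have hcoe : ∀ j ∈ s, rejTime R (j + 1) = (φ j : ℕ∞) := by
    intro j hj
    rw [hs, Finset.mem_filter] at hj
    exact (ENat.coe_toNat hj.2.1).symm
  -- G vanishes off s
  have hGzero : ∀ j ∈ range T, j ∉ s → G j = 0 := by
    intro j hjr hjs
    apply Finset.sum_eq_zero
    intro t ht
    rw [Finset.mem_Icc] at ht
    cases hrt : rejTime R (j + 1) with
    | top =>
      have : d t j = 0 := by simp only [hd, hrt]; rfl
      rw [this, mul_zero]
    | coe m =>
      have hmT : T < m := by
        by_contra hc
        push_neg at hc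
        exact hjs (by rw [hs, Finset.mem_filter]; exact ⟨hjr, by rw [hrt]; exact ⟨by simp, by simpa using hc⟩⟩)
      have : d t j = 0 := by
        simp only [hd, hrt]
        show δ ^ (t - m) * γ ((t : ℤ) - m) = 0
        rw [hγ_zero _ (by push_cast; omega), mul_zero]
      rw [this, mul_zero]
  -- bound on s
  have hφ_one : ∀ j ∈ s, R (φ j) = 1 ∧ 1 ≤ φ j :=
    fun j hj => rejTime_R_one hR (Nat.le_add_left 1 j) (hcoe j hj)
  have hφ_le : ∀ j ∈ s, φ j ≤ T := by
    intro j hj; rw [hs, Finset.mem_filter] at hj; exact hj.2.2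
  have hGbound : ∀ j ∈ s, G j ≤ δ ^ (T - φ j) * R (φ j) := by
    intro j hj
    set m := φ j with hm
    have hmT : m ≤ T := hφ_le j hj
    have hrt := hcoe j hj
    have e2 : ∀ t ∈ Finset.Icc 1 T,
        δ ^ (T - t) * d t j = δ ^ (T - m) * γ ((t : ℤ) - m) := by
      intro t ht
      rw [Finset.mem_Icc] at ht
      have : d t j = δ ^ (t - m) * γ ((t : ℤ) - m) := by simp only [hd, hrt]; rfl
      rw [this]
      rcases le_or_gt t m with h | h
      · rw [hγ_zero _ (by push_cast; omega), mul_zero, mul_zero, mul_zero]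
      · rw [← mul_assoc, ← pow_add]
        congr 2
        omega
    rw [show G j = ∑ t ∈ Finset.Icc 1 T, δ ^ (T - t) * d t j from rfl,
      Finset.sum_congr rfl e2, ← Finset.mul_sum]
    have hsum_shift : ∑ t ∈ Finset.Icc 1 T, γ ((t : ℤ) - m)
        = ∑ u ∈ Finset.Icc 1 (T - m), γ (u : ℤ) := by
      rw [← Finset.sum_subset (Finset.Icc_subset_Icc_left (by omega : 1 ≤ m + 1))
        (fun t ht hts => ?_)]
      · apply Finset.sum_nbij' (fun t => t - m) (fun u => u + m)
        · intro a ha; rw [Finset.mem_Icc] at *; omega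
        · intro a ha; rw [Finset.mem_Icc] at *; omega
        · intro a ha; rw [Finset.mem_Icc] at ha; omega
        · intro a ha; rw [Finset.mem_Icc] at ha; omega
        · intro a ha
          rw [Finset.mem_Icc] at ha
          congr 1
          push_cast
          omega
      · rw [Finset.mem_Icc] at ht hts
        apply hγ_zero
        have : t ≤ m := by omega
        push_cast
        omega
    rw [hsum_shift]
    have h1 : ∑ u ∈ Finset.Icc 1 (T - m), γ (u : ℤ) ≤ 1 := hγ_sum (T - m)
    have hδpow : (0:ℝ) ≤ δ ^ (T - m) := le_of_lt (pow_pos hδ0 _)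
    calc δ ^ (T - m) * ∑ u ∈ Finset.Icc 1 (T - m), γ (u : ℤ)
        ≤ δ ^ (T - m) * 1 := by apply mul_le_mul_of_nonneg_left h1 hδpow
      _ = δ ^ (T - m) * R m := by rw [(hφ_one j hj).1]
  -- injectivity of φ on s
  have hinj : Set.InjOn φ s := by
    intro j₁ hj₁ j₂ hj₂ hφeq
    have h₁ := hcoe j₁ (by simpa using hj₁)
    have h₂ := hcoe j₂ (by simpa using hj₂)
    rw [hφeq] at h₁
    have := rejTime_inj hR (Nat.le_add_left 1 j₁) (Nat.le_add_left 1 j₂) h₁ h₂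
    omega
  have hS2 : ∑ j ∈ range T, G j ≤ ∑ t ∈ Finset.Icc 1 T, δ ^ (T - t) * R t := by
    have step1 : ∑ j ∈ range T, G j = ∑ j ∈ s, G j :=
      (Finset.sum_subset (Finset.filter_subset _ _) hGzero).symm
    have step2 : ∑ j ∈ s, G j ≤ ∑ j ∈ s, δ ^ (T - φ j) * R (φ j) :=
      Finset.sum_le_sum hGbound
    have step3 : ∑ j ∈ s, δ ^ (T - φ j) * R (φ j)
        = ∑ m ∈ s.image φ, δ ^ (T - m) * R m :=
      (Finset.sum_image (f := fun m => δ ^ (T - m) * R m)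
        (fun x hx y hy h => hinj hx hy h)).symm
    have step4 : ∑ m ∈ s.image φ, δ ^ (T - m) * R m
        ≤ ∑ t ∈ Finset.Icc 1 T, δ ^ (T - t) * R t := by
      apply Finset.sum_le_sum_of_subset_of_nonneg
      · intro m hm
        rw [Finset.mem_image] at hm
        obtain ⟨j, hj, rfl⟩ := hm
        rw [Finset.mem_Icc]
        exact ⟨(hφ_one j hj).2, hφ_le j hj⟩
      · intro i _ _
        exact mul_nonneg (le_of_lt (pow_pos hδ0 _)) (hR_nonneg i)
    rw [step1]
    calc ∑ j ∈ s, G j ≤ ∑ j ∈ s, δ ^ (T - φ j) * R (φ j) := step2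
      _ = ∑ m ∈ s.image φ, δ ^ (T - m) * R m := step3
      _ ≤ _ := step4
  have hS2M : ∑ j ∈ range T, G j ≤ M := le_trans hS2 (le_max_left _ 1)
  -- conclude
  have hw₀' : (0:ℝ) ≤ w₀ := le_of_lt hw0
  have hαw : (0:ℝ) ≤ α - w₀ := by linarith
  calc w₀ * (∑ t ∈ Finset.Icc 1 T, δ ^ (T - t) * γ' t) + (α - w₀) * ∑ j ∈ range T, G j
      ≤ w₀ * M + (α - w₀) * M :=
        add_le_add (mul_le_mul_of_nonneg_left hS1 hw₀') (mul_le_mul_of_nonneg_left hS2M hαw)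
    _ = α * M := by ring
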